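/- The Dyck language of well-nested brackets over {[, ]} is accepted by a pebble-intervals automaton with one pebble: the PIA with states {q_[, q_]}, initial and accepting state q_], and transitions (q_], move(1; ▷, ◁), [, q_[) and (q_[, move(1; 1, ◁), ], q_]) accepts a string iff it has equally many left and right brackets and no prefix has more right than left brackets. -/

import Mathlib

/-- A pebble-intervals automaton (PIA): alphabet `α`, `m` pebbles, states `Q`,
initial state `qinit`, accepting states `F`, silent transitions `silent` and
move transitions `move q k i j a q'` where `i = none` denotes the left boundary ▷
and `j = none` denotes the right boundary ◁. -/
structure PIA (α : Type) where
  m : ℕ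
  Q : Type
  qinit : Q
  F : Set Q
  silent : Q → Q → Prop
  move : Q → Fin m → Option (Fin m) → Option (Fin m) → α → Q → Prop

/-- A configuration of a PIA on a string of length `n`: current state, pebble
assignment, and set of already-read positions. -/
structure PIAConfig {α : Type} (A : PIA α) (n : ℕ) where
  q : A.Q
  ρ : Fin A.m → Option (Fin n)
  N : Set (Fin n)

/-- Pebble `i` (or the left boundary, if `i = none`) lies strictly left of `ℓ`. -/
def leftOK {m n : ℕ} (ρ : Fin m → Option (Fin n)) (i : Option (Fin m)) (ℓ : Fin n) : Prop :=
  match i with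
  | none => True
  | some p => ∃ pi, ρ p = some pi ∧ pi < ℓ

/-- Pebble `j` (or the right boundary, if `j = none`) lies strictly right of `ℓ`. -/
def rightOK {m n : ℕ} (ρ : Fin m → Option (Fin n)) (j : Option (Fin m)) (ℓ : Fin n) : Prop :=
  match j with
  | none => True
  | some p => ∃ pj, ρ p = some pj ∧ ℓ < pj

/-- One step of a PIA on input `u`: either a silent transition, or a move
transition placing pebble `k` on an unread position strictly between `i` and `j`,
reading the letter there. -/
def PIAStep {α : Type} (A : PIA α) {n : ℕ} (u : Fin n → α)
    (c c' : PIAConfig A n) : Prop :=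
  (A.silent c.q c'.q ∧ c'.ρ = c.ρ ∧ c'.N = c.N) ∨
  (∃ (k : Fin A.m) (i j : Option (Fin A.m)) (ℓ : Fin n),
    A.move c.q k i j (u ℓ) c'.q ∧ ℓ ∉ c.N ∧
    leftOK c.ρ i ℓ ∧ rightOK c.ρ j ℓ ∧
    c'.ρ = Function.update c.ρ k (some ℓ) ∧ c'.N = insert ℓ c.N)

/-- The initial configuration: initial state, no pebbles placed, nothing read. -/
def PIAInit {α : Type} (A : PIA α) (n : ℕ) : PIAConfig A n :=
  ⟨A.qinit, fun _ => none, ∅⟩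

/-- A PIA accepts a string `u` if some computation from the initial configuration
reads all positions of `u` and ends in an accepting state. -/
def PIA.Accepts {α : Type} (A : PIA α) (u : List α) : Prop :=
  ∃ c : PIAConfig A u.length,
    Relation.ReflTransGen (PIAStep A u.get) (PIAInit A u.length) c ∧
    c.q ∈ A.F ∧ c.N = Set.univ

/-- The two bracket symbols. -/
inductive Brkt : Type
  | l  -- the left bracket `[`
  | r  -- the right bracket `]`
deriving DecidableEq

/-- The one-pebble PIA for the Dyck language: states `q_[` (= `false`) and
`q_]` (= `true`), initial and accepting state `q_]`, with transitions
`(q_], move(1; ▷, ◁), [, q_[)` and `(q_[, move(1; 1, ◁), ], q_])`. -/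
def dyckPIA : PIA Brkt where
  m := 1
  Q := Bool
  qinit := true
  F := {true}
  silent := fun _ _ => False
  move := fun q k i j a q' =>
    (q = true ∧ i = none ∧ j = none ∧ a = Brkt.l ∧ q' = false) ∨
    (q = false ∧ i = some k ∧ j = none ∧ a = Brkt.r ∧ q' = true)


def okPairs {n : ℕ} (u : Fin n → Brkt) (M : Finset (Fin n × Fin n)) : Prop :=
  (∀ p ∈ M, p.1 < p.2 ∧ u p.1 = Brkt.l ∧ u p.2 = Brkt.r) ∧
  (∀ p ∈ M, ∀ q ∈ M, p ≠ q → p.1 ≠ q.1 ∧ p.1 ≠ q.2 ∧ p.2 ≠ q.1 ∧ p.2 ≠ q.2)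

def elems {n : ℕ} (M : Finset (Fin n × Fin n)) : Finset (Fin n) :=
  M.image Prod.fst ∪ M.image Prod.snd

lemma mem_elems {n : ℕ} {M : Finset (Fin n × Fin n)} {i : Fin n} :
    i ∈ elems M ↔ ∃ p ∈ M, i = p.1 ∨ i = p.2 := by
  simp only [elems, Finset.mem_union, Finset.mem_image]
  constructor
  · rintro (⟨p, hp, rfl⟩ | ⟨p, hp, rfl⟩)
    · exact ⟨p, hp, Or.inl rfl⟩
    · exact ⟨p, hp, Or.inr rfl⟩
  · rintro ⟨p, hp, rfl | rfl⟩
    · exact Or.inl ⟨p, hp, rfl⟩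
    · exact Or.inr ⟨p, hp, rfl⟩

lemma elems_insert {n : ℕ} (pr : Fin n × Fin n) (M : Finset (Fin n × Fin n)) :
    elems (insert pr M) = insert pr.1 (insert pr.2 (elems M)) := by
  ext i
  simp only [mem_elems, Finset.mem_insert]
  constructor
  · rintro ⟨p, (rfl | hp), h⟩
    · tauto
    · exact Or.inr (Or.inr ⟨p, hp, h⟩)
  · rintro (rfl | rfl | h)
    · exact ⟨pr, Or.inl rfl, Or.inl rfl⟩
    · exact ⟨pr, Or.inl rfl, Or.inr rfl⟩
    · obtain ⟨p, hp, h2⟩ := h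
      exact ⟨p, Or.inr hp, h2⟩

def DInv {n : ℕ} (u : Fin n → Brkt) (c : PIAConfig dyckPIA n) : Prop :=
  ∃ M : Finset (Fin n × Fin n), okPairs u M ∧
    ((c.q = true ∧ c.N = ↑(elems M)) ∨
     (c.q = false ∧ ∃ p : Fin n, c.ρ (0 : Fin 1) = some p ∧ u p = Brkt.l ∧ p ∉ elems M ∧
        c.N = insert p ↑(elems M)))

lemma DInv_init {n : ℕ} (u : Fin n → Brkt) : DInv u (PIAInit dyckPIA n) := by
  refine ⟨∅, ⟨by simp, by simp⟩, Or.inl ⟨rfl, ?_⟩⟩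
  simp [PIAInit, elems]

lemma DInv_step {n : ℕ} (u : Fin n → Brkt) (c c' : PIAConfig dyckPIA n)
    (hs : PIAStep dyckPIA u c c') (h : DInv u c) : DInv u c' := by
  rcases hs with ⟨hsil, -, -⟩ | ⟨k, i, j, ℓ, hmove, hℓ, hleft, hright, hρ, hN⟩
  · exact (hsil : False).elim
  · have hm : (c.q = true ∧ i = none ∧ j = none ∧ u ℓ = Brkt.l ∧ c'.q = false) ∨
        (c.q = false ∧ i = some k ∧ j = none ∧ u ℓ = Brkt.r ∧ c'.q = true) := hmove
    have hk : k = (0 : Fin 1) := Subsingleton.elim (α := Fin 1) _ _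
    obtain ⟨M, hM, hinv⟩ := h
    rcases hm with ⟨hq, hi, hj, ha, hq'⟩ | ⟨hq, hi, hj, ha, hq'⟩
    · -- read a left bracket
      rcases hinv with ⟨-, hNe⟩ | ⟨hq0, -⟩
      · refine ⟨M, hM, Or.inr ⟨hq', ℓ, ?_, ha, ?_, ?_⟩⟩
        · rw [hρ, hk]; exact Function.update_self _ _ _
        · intro hmem
          exact hℓ (hNe ▸ (by exact_mod_cast hmem))
        · rw [hN, hNe]
      · rw [hq] at hq0; exact absurd hq0 (by simp)
    · -- read a right bracket
      rcases hinv with ⟨hq0, -⟩ | ⟨-, p, hp, hpl, hpM, hNe⟩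
      · rw [hq] at hq0; exact absurd hq0 (by simp)
      · rw [hi] at hleft
        obtain ⟨pi, hpi, hlt⟩ := hleft
        rw [hk, hp] at hpi
        obtain rfl : p = pi := by injection hpi
        have hℓM : ℓ ∉ elems M := by
          intro hmem
          exact hℓ (hNe ▸ Set.mem_insert_of_mem _ (by exact_mod_cast hmem))
        have hℓp : ℓ ≠ p := by
          intro h'; exact hℓ (hNe ▸ h' ▸ Set.mem_insert _ _)
        refine ⟨insert (p, ℓ) M, ⟨?_, ?_⟩, Or.inl ⟨hq', ?_⟩⟩
        · rintro q hq2
          rcases Finset.mem_insert.1 hq2 with rfl | hq2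
          · exact ⟨hlt, hpl, ha⟩
          · exact hM.1 q hq2
        · rintro q1 hq1 q2 hq2 hne
          rcases Finset.mem_insert.1 hq1 with rfl | hq1 <;>
            rcases Finset.mem_insert.1 hq2 with rfl | hq2
          · exact absurd rfl hne
          · refine ⟨?_, ?_, ?_, ?_⟩ <;> intro h' <;>
              [exact hpM (mem_elems.2 ⟨q2, hq2, Or.inl h'⟩);
               exact hpM (mem_elems.2 ⟨q2, hq2, Or.inr h'⟩);
               exact hℓM (mem_elems.2 ⟨q2, hq2, Or.inl h'⟩);
               exact hℓM (mem_elems.2 ⟨q2, hq2, Or.inr h'⟩)]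
          · refine ⟨?_, ?_, ?_, ?_⟩ <;> intro h' <;>
              [exact hpM (mem_elems.2 ⟨q1, hq1, Or.inl h'.symm⟩);
               exact hℓM (mem_elems.2 ⟨q1, hq1, Or.inl h'.symm⟩);
               exact hpM (mem_elems.2 ⟨q1, hq1, Or.inr h'.symm⟩);
               exact hℓM (mem_elems.2 ⟨q1, hq1, Or.inr h'.symm⟩)]
          · exact hM.2 q1 hq1 q2 hq2 hne
        · rw [hN, hNe, elems_insert]
          ext x
          simp only [Set.mem_insert_iff, Finset.coe_insert]
          tauto

lemma DInv_reach {n : ℕ} (u : Fin n → Brkt) (c : PIAConfig dyckPIA n)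
    (h : Relation.ReflTransGen (PIAStep dyckPIA u) (PIAInit dyckPIA n) c) : DInv u c := by
  induction h with
  | refl => exact DInv_init u
  | tail _ hs ih => exact DInv_step _ _ _ hs ih
lemma count_take_card {α : Type} [DecidableEq α] (w : List α) (a : α) (t : ℕ) :
    (w.take t).count a
      = (Finset.univ.filter (fun i : Fin w.length => (i : ℕ) < t ∧ w.get i = a)).card := by
  induction t with
  | zero => simp
  | succ s ih =>
    rw [List.take_succ]
    by_cases h : s < w.length
    · have hg : w[s]? = some (w.get ⟨s, h⟩) := by
        rw [List.getElem?_eq_getElem h]; rfl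
      rw [hg]
      have hset : (Finset.univ.filter (fun i : Fin w.length => (i : ℕ) < s + 1 ∧ w.get i = a))
          = (Finset.univ.filter (fun i : Fin w.length => (i : ℕ) < s ∧ w.get i = a))
            ∪ (Finset.univ.filter (fun i : Fin w.length => (i : ℕ) = s ∧ w.get i = a)) := by
        ext i
        simp only [Finset.mem_filter, Finset.mem_union, Finset.mem_univ, true_and]
        constructor
        · rintro ⟨hi, ha⟩
          rcases Nat.lt_succ_iff_lt_or_eq.1 hi with h' | h'
          · exact Or.inl ⟨h', ha⟩
          · exact Or.inr ⟨h', ha⟩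
        · rintro (⟨hi, ha⟩ | ⟨hi, ha⟩)
          · exact ⟨Nat.lt_succ_of_lt hi, ha⟩
          · exact ⟨by omega, ha⟩
      rw [hset, Finset.card_union_of_disjoint]
      · rw [List.count_append, ih]
        congr 1
        by_cases ha : w.get ⟨s, h⟩ = a
        · have : (Finset.univ.filter (fun i : Fin w.length => (i : ℕ) = s ∧ w.get i = a))
              = {⟨s, h⟩} := by
            ext i
            simp only [Finset.mem_filter, Finset.mem_univ, true_and, Finset.mem_singleton]
            constructor
            · rintro ⟨hi, _⟩; exact Fin.ext hi
            · rintro rfl; exact ⟨rfl, ha⟩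
          rw [this]
          simp only [Finset.card_singleton, List.count_singleton]
          simp [List.get_eq_getElem] at ha
          simp [ha]
        · have : (Finset.univ.filter (fun i : Fin w.length => (i : ℕ) = s ∧ w.get i = a))
              = ∅ := by
            ext i
            simp only [Finset.mem_filter, Finset.mem_univ, true_and, Finset.notMem_empty,
              iff_false, not_and]
            rintro hi
            have : i = ⟨s, h⟩ := Fin.ext hi
            rw [this]; exact ha
          rw [this]
          simp only [Finset.card_empty, List.count_singleton]
          simp only [List.get_eq_getElem] at ha
          rw [List.count_eq_zero]
          simp [ha, eq_comm]
          intro hc; exact ha hc.symm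
      · rw [Finset.disjoint_left]
        simp only [Finset.mem_filter, Finset.mem_univ, true_and, not_and]
        rintro i ⟨h1, -⟩ h2
        omega
    · have hg : w[s]? = none := by
        rw [List.getElem?_eq_none]; omega
      rw [hg]
      have hset : (Finset.univ.filter (fun i : Fin w.length => (i : ℕ) < s + 1 ∧ w.get i = a))
          = (Finset.univ.filter (fun i : Fin w.length => (i : ℕ) < s ∧ w.get i = a)) := by
        ext i
        simp only [Finset.mem_filter]
        have := i.isLt
        constructor
        · rintro ⟨_, h1, h2⟩; exact ⟨by trivial, by omega, h2⟩
        · rintro ⟨_, h1, h2⟩; exact ⟨by trivial, by omega, h2⟩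
      rw [hset, ← ih]
      simp

lemma card_r_le_l {n : ℕ} (u : Fin n → Brkt) (M : Finset (Fin n × Fin n))
    (hM : okPairs u M) (hcov : elems M = Finset.univ) (t : ℕ) :
    (Finset.univ.filter (fun i : Fin n => (i : ℕ) < t ∧ u i = Brkt.r)).card
      ≤ (Finset.univ.filter (fun i : Fin n => (i : ℕ) < t ∧ u i = Brkt.l)).card := by
  classical
  have hsnd : ∀ b : Fin n, u b = Brkt.r → ∃ p ∈ M, p.2 = b := by
    intro b hb
    have : b ∈ elems M := hcov ▸ Finset.mem_univ b
    obtain ⟨p, hp, h | h⟩ := mem_elems.1 this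
    · exact absurd ((hM.1 p hp).2.1) (by rw [← h, hb]; simp)
    · exact ⟨p, hp, h.symm⟩
  set f : Fin n → Fin n := fun b =>
    if h : ∃ p ∈ M, p.2 = b then h.choose.1 else b with hf
  apply Finset.card_le_card_of_injOn f
  · intro b hb
    simp only [Finset.mem_coe, Finset.mem_filter, Finset.mem_univ, true_and] at hb ⊢
    obtain ⟨hbt, hbr⟩ := hb
    have h := hsnd b hbr
    rw [hf]; simp only [dif_pos h]
    obtain ⟨hpM, hpb⟩ := h.choose_spec
    have h1 := hM.1 _ hpM
    refine ⟨lt_trans ?_ hbt, h1.2.1⟩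
    exact_mod_cast hpb ▸ h1.1
  · intro b1 hb1 b2 hb2 heq
    simp only [Finset.coe_filter, Set.mem_setOf_eq, Finset.mem_univ, true_and] at hb1 hb2
    have h1 := hsnd b1 hb1.2
    have h2 := hsnd b2 hb2.2
    rw [hf] at heq
    simp only [dif_pos h1, dif_pos h2] at heq
    obtain ⟨hp1, hb1'⟩ := h1.choose_spec
    obtain ⟨hp2, hb2'⟩ := h2.choose_spec
    by_contra hne
    have hpq : h1.choose ≠ h2.choose := by
      intro h'; exact hne (hb1' ▸ hb2' ▸ congrArg Prod.snd h')
    exact (hM.2 _ hp1 _ hp2 hpq).1 heq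

lemma filter_l_eq {n : ℕ} (u : Fin n → Brkt) (M : Finset (Fin n × Fin n))
    (hM : okPairs u M) (hcov : elems M = Finset.univ) :
    (Finset.univ.filter (fun i : Fin n => u i = Brkt.l)) = M.image Prod.fst := by
  ext i
  simp only [Finset.mem_filter, Finset.mem_univ, true_and, Finset.mem_image]
  constructor
  · intro hi
    have : i ∈ elems M := hcov ▸ Finset.mem_univ i
    obtain ⟨p, hp, h | h⟩ := mem_elems.1 this
    · exact ⟨p, hp, h.symm⟩
    · exact absurd ((hM.1 p hp).2.2) (by rw [← h, hi]; simp)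
  · rintro ⟨p, hp, rfl⟩
    exact (hM.1 p hp).2.1

lemma filter_r_eq {n : ℕ} (u : Fin n → Brkt) (M : Finset (Fin n × Fin n))
    (hM : okPairs u M) (hcov : elems M = Finset.univ) :
    (Finset.univ.filter (fun i : Fin n => u i = Brkt.r)) = M.image Prod.snd := by
  ext i
  simp only [Finset.mem_filter, Finset.mem_univ, true_and, Finset.mem_image]
  constructor
  · intro hi
    have : i ∈ elems M := hcov ▸ Finset.mem_univ i
    obtain ⟨p, hp, h | h⟩ := mem_elems.1 this
    · exact absurd ((hM.1 p hp).2.1) (by rw [← h, hi]; simp)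
    · exact ⟨p, hp, h.symm⟩
  · rintro ⟨p, hp, rfl⟩
    exact (hM.1 p hp).2.2

lemma card_l_eq_r {n : ℕ} (u : Fin n → Brkt) (M : Finset (Fin n × Fin n))
    (hM : okPairs u M) (hcov : elems M = Finset.univ) :
    (Finset.univ.filter (fun i : Fin n => u i = Brkt.l)).card
      = (Finset.univ.filter (fun i : Fin n => u i = Brkt.r)).card := by
  rw [filter_l_eq u M hM hcov, filter_r_eq u M hM hcov,
    Finset.card_image_of_injOn, Finset.card_image_of_injOn]
  · intro p hp q hq h
    by_contra hne
    exact (hM.2 p hp q hq hne).2.2.2 h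
  · intro p hp q hq h
    by_contra hne
    exact (hM.2 p hp q hq hne).1 h

lemma dyck_forward (w : List Brkt) (h : dyckPIA.Accepts w) :
    w.count Brkt.l = w.count Brkt.r ∧
      ∀ t : ℕ, (w.take t).count Brkt.r ≤ (w.take t).count Brkt.l := by
  classical
  obtain ⟨c, hreach, hF, hN⟩ := h
  have hq : c.q = true := hF
  obtain ⟨M, hM, hinv⟩ := DInv_reach w.get c hreach
  rcases hinv with ⟨-, hNe⟩ | ⟨hq0, -⟩
  swap
  · rw [hq] at hq0; exact absurd hq0 (by simp)
  have hcov : elems M = Finset.univ := by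
    apply Finset.coe_injective
    rw [← hNe, hN]; simp
  constructor
  · conv_lhs => rw [← List.take_length (l := w)]
    conv_rhs => rw [← List.take_length (l := w)]
    rw [count_take_card, count_take_card]
    have he : ∀ a : Brkt,
        (Finset.univ.filter (fun i : Fin w.length => (i : ℕ) < w.length ∧ w.get i = a))
          = (Finset.univ.filter (fun i : Fin w.length => w.get i = a)) := by
      intro a
      apply Finset.filter_congr
      intro i _
      simp [i.isLt]
    rw [he, he]
    exact card_l_eq_r w.get M hM hcov
  · intro t
    rw [count_take_card, count_take_card]
    exact card_r_le_l w.get M hM hcov t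

lemma run_of_matching {n : ℕ} (u : Fin n → Brkt) (M : Finset (Fin n × Fin n)) :
    okPairs u M →
    ∀ (ρ : Fin dyckPIA.m → Option (Fin n)) (N : Set (Fin n)),
      (∀ i ∈ elems M, i ∉ N) →
      ∃ ρ' : Fin dyckPIA.m → Option (Fin n), Relation.ReflTransGen (PIAStep dyckPIA u)
        ⟨true, ρ, N⟩ ⟨true, ρ', N ∪ ↑(elems M)⟩ := by
  classical
  induction M using Finset.induction_on with
  | empty =>
    intro _ ρ N _
    refine ⟨ρ, ?_⟩
    have he : N ∪ ↑(elems (∅ : Finset (Fin n × Fin n))) = N := by simp [elems]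
    rw [he]
  | @insert pr M hpr ih =>
    intro hok ρ N hdis
    have hokM : okPairs u M := by
      refine ⟨fun p hp => hok.1 p (Finset.mem_insert_of_mem hp),
        fun p hp q hq => hok.2 p (Finset.mem_insert_of_mem hp) q (Finset.mem_insert_of_mem hq)⟩
    obtain ⟨hlt, hul, hur⟩ := hok.1 pr (Finset.mem_insert_self pr M)
    have h1N : pr.1 ∉ N := hdis _ (by rw [elems_insert]; simp)
    have h2N : pr.2 ∉ N := hdis _ (by rw [elems_insert]; simp)
    have h21 : pr.2 ≠ pr.1 := ne_of_gt hlt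
    set ρ1 : Fin dyckPIA.m → Option (Fin n) := Function.update ρ (0 : Fin 1) (some pr.1) with hρ1
    set ρ2 : Fin dyckPIA.m → Option (Fin n) := Function.update ρ1 (0 : Fin 1) (some pr.2) with hρ2
    have step1 : PIAStep dyckPIA u ⟨true, ρ, N⟩ ⟨false, ρ1, insert pr.1 N⟩ := by
      refine Or.inr ⟨(0 : Fin 1), none, none, pr.1, Or.inl ⟨rfl, rfl, rfl, hul, rfl⟩, h1N,
        trivial, trivial, rfl, rfl⟩
    have step2 : PIAStep dyckPIA u ⟨false, ρ1, insert pr.1 N⟩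
        ⟨true, ρ2, insert pr.2 (insert pr.1 N)⟩ := by
      refine Or.inr ⟨(0 : Fin 1), some (0 : Fin 1), none, pr.2, Or.inr ⟨rfl, rfl, rfl, hur, rfl⟩, ?_, ?_,
        trivial, rfl, rfl⟩
      · intro hmem
        rcases Set.mem_insert_iff.1 hmem with h' | h'
        · exact h21 h'
        · exact h2N h'
      · exact ⟨pr.1, by rw [hρ1]; exact Function.update_self (0 : Fin 1) (some pr.1) ρ, hlt⟩
    have hdis2 : ∀ i ∈ elems M, i ∉ (insert pr.2 (insert pr.1 N) : Set (Fin n)) := by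
      intro i hi hmem
      obtain ⟨p, hp, hip⟩ := mem_elems.1 hi
      have hne : pr ≠ p := fun h' => hpr (h' ▸ hp)
      have h2 := hok.2 pr (Finset.mem_insert_self pr M) p (Finset.mem_insert_of_mem hp) hne
      rcases Set.mem_insert_iff.1 hmem with h' | h'
      · rcases hip with rfl | rfl
        · exact h2.2.2.1 h'.symm
        · exact h2.2.2.2 h'.symm
      · rcases Set.mem_insert_iff.1 h' with h'' | h''
        · rcases hip with rfl | rfl
          · exact h2.1 h''.symm
          · exact h2.2.1 h''.symm
        · exact hdis i (by rw [elems_insert]; simp [mem_elems.2 ⟨p, hp, hip⟩]) h''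
    obtain ⟨ρ', hrun⟩ := ih hokM ρ2 (insert pr.2 (insert pr.1 N)) hdis2
    refine ⟨ρ', ?_⟩
    have hNeq : (insert pr.2 (insert pr.1 N) : Set (Fin n)) ∪ ↑(elems M)
        = N ∪ ↑(elems (insert pr M)) := by
      rw [elems_insert]
      ext x
      simp only [Set.mem_union, Set.mem_insert_iff, Finset.coe_insert, Finset.mem_coe]
      tauto
    rw [hNeq] at hrun
    exact Relation.ReflTransGen.head step1 (Relation.ReflTransGen.head step2 hrun)

lemma brkt_length_eq (w : List Brkt) : w.length = w.count Brkt.l + w.count Brkt.r := by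
  induction w with
  | nil => simp
  | cons x t ih => cases x <;> simp [List.count_cons, ih] <;> omega

lemma exists_matching : ∀ (n : ℕ) (w : List Brkt), w.length = n →
    w.count Brkt.l = w.count Brkt.r →
    (∀ t : ℕ, (w.take t).count Brkt.r ≤ (w.take t).count Brkt.l) →
    ∃ M : Finset (Fin w.length × Fin w.length), okPairs w.get M ∧ elems M = Finset.univ := by
  intro n
  induction n using Nat.strong_induction_on with
  | _ n ih =>
  intro w hn hc hp
  subst hn
  rcases eq_or_ne w [] with rfl | hwne
  · refine ⟨∅, ⟨by simp, by simp⟩, ?_⟩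
    apply Finset.eq_univ_of_forall
    intro i
    exact absurd i.isLt (by simp)
  have hlen : 0 < w.length := List.length_pos_iff.2 hwne
  have h0l : w.get ⟨0, hlen⟩ = Brkt.l := by
    rcases w with _ | ⟨x, t⟩
    · simp at hlen
    · have h1 := hp 1
      cases x
      · rfl
      · simp [List.count_cons] at h1
  have hr1 : 0 < w.count Brkt.r := by
    by_contra h
    have h0 : w.count Brkt.r = 0 := by omega
    have := brkt_length_eq w
    rw [hc, h0] at this
    omega
  have hmem : Brkt.r ∈ w := List.count_pos_iff.1 hr1
  set k := w.findIdx (· == Brkt.r) with hkdef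
  have hk : k < w.length := List.findIdx_lt_length_of_exists ⟨Brkt.r, hmem, by simp⟩
  have hwk : w.get ⟨k, hk⟩ = Brkt.r := by
    have := List.findIdx_getElem (p := (· == Brkt.r)) (xs := w) (w := hk)
    simpa using this
  have hnr : ∀ i : ℕ, (h : i < w.length) → i < k → w.get ⟨i, h⟩ = Brkt.l := by
    intro i h hik
    have := List.not_of_lt_findIdx (p := (· == Brkt.r)) (xs := w) hik
    cases h' : w.get ⟨i, h⟩
    · rfl
    · exfalso
      have h'' : w[i] = Brkt.r := h'
      rw [h''] at this
      simp at this
  have hk1 : 1 ≤ k := by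
    by_contra hcon
    have h0 : k = 0 := by omega
    have hfk : (⟨k, hk⟩ : Fin w.length) = ⟨0, hlen⟩ := Fin.ext h0
    rw [hfk, h0l] at hwk
    exact absurd hwk (by simp)
  set a := k - 1 with hadef
  set A := w.take a with hAdef
  set B := w.drop (k + 1) with hBdef
  have hA : A.length = a := by
    rw [hAdef, List.length_take]; omega
  have hB : B.length = w.length - (k + 1) := by
    rw [hBdef, List.length_drop]
  have hwa : w.get ⟨a, by omega⟩ = Brkt.l := hnr a (by omega) (by omega)
  have hw2 : w = A ++ Brkt.l :: Brkt.r :: B := by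
    have h1 : w.drop a = Brkt.l :: Brkt.r :: B := by
      rw [List.drop_eq_getElem_cons (show a < w.length by omega)]
      have hwa' : w[a]'(by omega) = Brkt.l := hwa
      rw [hwa']
      congr 1
      have hd : w.drop (a + 1) = w.drop k := by congr 1; omega
      rw [hd, List.drop_eq_getElem_cons hk]
      have hwk' : w[k]'hk = Brkt.r := hwk
      rw [hwk']
    calc w = w.take a ++ w.drop a := (List.take_append_drop a w).symm
      _ = A ++ (Brkt.l :: Brkt.r :: B) := by rw [h1, ← hAdef]
  set v := A ++ B with hvdef
  have hlenv : v.length = w.length - 2 := by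
    have := congrArg List.length hw2
    simp only [List.length_append, List.length_cons] at this
    rw [hvdef, List.length_append]
    omega
  have hcv : v.count Brkt.l = v.count Brkt.r := by
    rw [hw2] at hc
    rw [hvdef]
    simp [List.count_append, List.count_cons] at hc ⊢
    omega
  have hpv : ∀ t : ℕ, (v.take t).count Brkt.r ≤ (v.take t).count Brkt.l := by
    intro t
    by_cases ht : t ≤ a
    · have h1 : v.take t = A.take t := by
        rw [hvdef, List.take_append]
        have h2 : t - A.length = 0 := by omega
        rw [h2]
        simp
      rw [h1]
      have h0 : (A.take t).count Brkt.r = 0 := by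
        rw [List.count_eq_zero]
        intro hmemr
        have hmem' : Brkt.r ∈ A := List.mem_of_mem_take hmemr
        obtain ⟨i, hi, hgi⟩ := List.getElem_of_mem hmem'
        have hiA : i < a := by rw [← hA]; exact hi
        have hAi : A[i] = w[i]'(by omega) := List.getElem_take
        have hwi : w[i]'(by omega) = Brkt.l := hnr i (by omega) (by omega)
        rw [hAi, hwi] at hgi
        exact absurd hgi (by simp)
      omega
    · push_neg at ht
      have h2 := hp (t + 2)
      have h1 : w.take (t + 2) = A ++ Brkt.l :: Brkt.r :: B.take (t - a) := by
        conv_lhs => rw [hw2]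
        rw [List.take_append,
          List.take_of_length_le (show A.length ≤ t + 2 by omega)]
        congr 1
        have h3 : t + 2 - A.length = (t - a) + 2 := by omega
        rw [h3]
        rfl
      have h3 : v.take t = A ++ B.take (t - a) := by
        rw [hvdef, List.take_append,
          List.take_of_length_le (show A.length ≤ t by omega), hA]
      rw [h3]
      rw [h1] at h2
      simp [List.count_append, List.count_cons] at h2 ⊢
      omega
  obtain ⟨M', hM', hcov'⟩ := ih (w.length - 2) (by omega) v (by omega) hcv hpv
  -- the embedding of positions of `v` into positions of `w`
  set e : Fin v.length → Fin w.length := fun i =>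
    if h : (i : ℕ) < a then ⟨i, by omega⟩
    else ⟨(i : ℕ) + 2, by have := i.isLt; omega⟩
    with hedef
  have he_val : ∀ i : Fin v.length, ((e i : ℕ) = i ∧ (i : ℕ) < a) ∨
      ((e i : ℕ) = i + 2 ∧ a ≤ (i : ℕ)) := by
    intro i
    rw [hedef]
    by_cases h : (i : ℕ) < a
    · left; simp [h]
    · right; simp [h]; omega
  have he_avoid : ∀ i : Fin v.length, (e i : ℕ) ≠ a ∧ (e i : ℕ) ≠ k := by
    intro i
    rcases he_val i with ⟨h1, h2⟩ | ⟨h1, h2⟩ <;> omega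
  have he_mono : ∀ i j : Fin v.length, i < j → e i < e j := by
    intro i j hij
    have hij' : (i : ℕ) < (j : ℕ) := hij
    rcases he_val i with ⟨h1, h2⟩ | ⟨h1, h2⟩ <;> rcases he_val j with ⟨h3, h4⟩ | ⟨h3, h4⟩ <;>
      (show (e i : ℕ) < (e j : ℕ); omega)
  have he_inj : Function.Injective e := by
    intro i j hij
    have h' : (e i : ℕ) = (e j : ℕ) := congrArg Fin.val hij
    apply Fin.ext
    rcases he_val i with ⟨h1, h2⟩ | ⟨h1, h2⟩ <;> rcases he_val j with ⟨h3, h4⟩ | ⟨h3, h4⟩ <;>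
      omega
  have he_letter : ∀ i : Fin v.length, v.get i = w.get (e i) := by
    intro i
    have hiv : (i : ℕ) < v.length := i.isLt
    rcases he_val i with ⟨h1, h2⟩ | ⟨h1, h2⟩
    · have hgl : v.get i = A[(i : ℕ)]'(by omega) := List.getElem_append_left (by omega)
      have hAi : A[(i : ℕ)]'(by omega) = w[(i : ℕ)]'(by omega) := List.getElem_take
      rw [hgl, hAi, List.get_eq_getElem]
      congr 1
      omega
    · have hbd : (i : ℕ) - a < B.length := by omega
      have hgl : v.get i = B[(i : ℕ) - a]'hbd := by
        show v[(i : ℕ)] = _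
        rw [List.getElem_append_right (show A.length ≤ (i : ℕ) by omega)]
        congr 1
        omega
      have hgb : B[(i : ℕ) - a]'hbd
          = w[(k + 1) + ((i : ℕ) - a)]'(by omega) := List.getElem_drop
      rw [hgl, hgb, List.get_eq_getElem]
      congr 1
      omega
  set pr0 : Fin w.length × Fin w.length := (⟨a, by omega⟩, ⟨k, hk⟩) with hpr0
  set M : Finset (Fin w.length × Fin w.length) :=
    insert pr0 (M'.image (fun p => (e p.1, e p.2))) with hMdef
  have hMok : okPairs w.get M := by
    constructor
    · intro p hp2
      rcases Finset.mem_insert.1 hp2 with rfl | hp2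
      · exact ⟨by show a < k; omega, hwa, hwk⟩
      · obtain ⟨q, hq, rfl⟩ := Finset.mem_image.1 hp2
        obtain ⟨hlt, hql, hqr⟩ := hM'.1 q hq
        exact ⟨he_mono _ _ hlt, by rw [← he_letter]; exact hql, by rw [← he_letter]; exact hqr⟩
    · intro p hp2 q hq2 hne
      rcases Finset.mem_insert.1 hp2 with rfl | hp2 <;>
        rcases Finset.mem_insert.1 hq2 with rfl | hq2
      · exact absurd rfl hne
      · obtain ⟨q', hq', rfl⟩ := Finset.mem_image.1 hq2
        refine ⟨?_, ?_, ?_, ?_⟩ <;> intro h' <;>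
          [exact (he_avoid q'.1).1 (congrArg Fin.val h').symm;
           exact (he_avoid q'.2).1 (congrArg Fin.val h').symm;
           exact (he_avoid q'.1).2 (congrArg Fin.val h').symm;
           exact (he_avoid q'.2).2 (congrArg Fin.val h').symm]
      · obtain ⟨p', hp', rfl⟩ := Finset.mem_image.1 hp2
        refine ⟨?_, ?_, ?_, ?_⟩ <;> intro h' <;>
          [exact (he_avoid p'.1).1 (congrArg Fin.val h');
           exact (he_avoid p'.1).2 (congrArg Fin.val h');
           exact (he_avoid p'.2).1 (congrArg Fin.val h');
           exact (he_avoid p'.2).2 (congrArg Fin.val h')]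
      · obtain ⟨p', hp', rfl⟩ := Finset.mem_image.1 hp2
        obtain ⟨q', hq', rfl⟩ := Finset.mem_image.1 hq2
        have hne' : p' ≠ q' := by rintro rfl; exact hne rfl
        obtain ⟨d1, d2, d3, d4⟩ := hM'.2 p' hp' q' hq' hne'
        refine ⟨?_, ?_, ?_, ?_⟩ <;> intro h' <;>
          [exact d1 (he_inj h'); exact d2 (he_inj h'); exact d3 (he_inj h'); exact d4 (he_inj h')]
  have hMcov : elems M = Finset.univ := by
    apply Finset.eq_univ_of_forall
    intro j
    by_cases hja : (j : ℕ) = a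
    · exact mem_elems.2 ⟨pr0, Finset.mem_insert_self _ _, Or.inl (Fin.ext hja)⟩
    by_cases hjk : (j : ℕ) = k
    · exact mem_elems.2 ⟨pr0, Finset.mem_insert_self _ _, Or.inr (Fin.ext hjk)⟩
    have hjlt := j.isLt
    have hi0 : (if (j : ℕ) < a then (j : ℕ) else (j : ℕ) - 2) < v.length := by
      by_cases h : (j : ℕ) < a
      · simp only [if_pos h]; omega
      · simp only [if_neg h]; omega
    set i0 : Fin v.length := ⟨if (j : ℕ) < a then (j : ℕ) else (j : ℕ) - 2, hi0⟩
      with hi0def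
    have he0 : e i0 = j := by
      apply Fin.ext
      by_cases h : (j : ℕ) < a
      · have hv1 : (i0 : ℕ) = (j : ℕ) := by rw [hi0def]; simp [h]
        rcases he_val i0 with ⟨h1, h2⟩ | ⟨h1, h2⟩ <;> omega
      · have hjk2 : k < (j : ℕ) := by omega
        have hv1 : (i0 : ℕ) = (j : ℕ) - 2 := by rw [hi0def]; simp [h]
        rcases he_val i0 with ⟨h1, h2⟩ | ⟨h1, h2⟩ <;> omega
    have hmem0 : i0 ∈ elems M' := hcov' ▸ Finset.mem_univ i0
    obtain ⟨p, hpM', hip⟩ := mem_elems.1 hmem0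
    refine mem_elems.2 ⟨(e p.1, e p.2),
      Finset.mem_insert_of_mem (Finset.mem_image.2 ⟨p, hpM', rfl⟩), ?_⟩
    rcases hip with h' | h'
    · exact Or.inl (by rw [← he0, h'])
    · exact Or.inr (by rw [← he0, h'])
  exact ⟨M, hMok, hMcov⟩

lemma dyck_backward (w : List Brkt)
    (hc : w.count Brkt.l = w.count Brkt.r)
    (hp : ∀ t : ℕ, (w.take t).count Brkt.r ≤ (w.take t).count Brkt.l) :
    dyckPIA.Accepts w := by
  obtain ⟨M, hM, hcov⟩ := exists_matching w.length w rfl hc hp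
  obtain ⟨ρ', hrun⟩ := run_of_matching w.get M hM (fun _ => none) ∅
    (fun i _ => Set.notMem_empty i)
  refine ⟨⟨true, ρ', ∅ ∪ ↑(elems M)⟩, hrun, rfl, ?_⟩
  rw [hcov]
  simp


/-- `dyckPIA` accepts a string iff it has equally many left and right brackets
and no prefix has more right than left brackets. -/
theorem dyckPIA_accepts_iff (w : List Brkt) :
    dyckPIA.Accepts w ↔
      (w.count Brkt.l = w.count Brkt.r ∧
       ∀ n : ℕ, (w.take n).count Brkt.r ≤ (w.take n).count Brkt.l) := by
  constructor
  · exact dyck_forward w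
  · rintro ⟨hc, hp⟩
    exact dyck_backward w hc hp
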